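/- Suppose the random vector X has support in [0,∞)^d, its margins satisfy 1 − F_j(x) ~ e^{−ψ(x)} as x → ∞ for each j = 1,…,d, where e^{−ψ} is a von Mises function, and its joint survival function satisfies −log P(X ≥ tx)/ψ(t) → g_*(x) as t → ∞ for every x ∈ [0,∞)^d \ {0}. Further assume g_* is strictly increasing, in the sense that g_*(x) < g_*(y) whenever x ≤ y componentwise and x ≠ y. Then for r_n satisfying ψ(r_n) ~ log n, the sample clouds N_n = {X_1/r_n, …, X_n/r_n} converge in probability onto G = {x ∈ [0,∞)^d : g_*(x) ≤ 1}. -/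

import Mathlib

open MeasureTheory Filter Topology ProbabilityTheory

/-- The `n`-point sample cloud `{X 1 / r n, …, X n / r n}` of the scaled observations. -/
def sampleCloud {Ω : Type*} {d : ℕ} (X : ℕ → Ω → (Fin d → ℝ)) (r : ℕ → ℝ)
    (n : ℕ) (ω : Ω) : Set (Fin d → ℝ) :=
  {y | ∃ i, 1 ≤ i ∧ i ≤ n ∧ y = (r n)⁻¹ • X i ω}

/-- Convergence in probability of random sets onto a deterministic set `G`, in the sense that
the Hausdorff distance to `G` tends to `0` in probability. -/
def ConvInProbOnto {Ω : Type*} [MeasurableSpace Ω] {d : ℕ} (μ : Measure Ω)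
    (N : ℕ → Ω → Set (Fin d → ℝ)) (G : Set (Fin d → ℝ)) : Prop :=
  ∀ ε : ℝ, 0 < ε →
    Tendsto (fun n => μ {ω | ε < Metric.hausdorffDist (N n ω) G}) atTop (𝓝 0)

/-- `e^{-ψ}` is a von Mises function: `ψ` is `C²` with positive derivative and
`(1/ψ')' → 0` at infinity. -/
def IsVonMisesExp (ψ : ℝ → ℝ) : Prop :=
  ContDiff ℝ 2 ψ ∧ (∀ x, 0 < deriv ψ x) ∧
    Tendsto (deriv fun x => (deriv ψ x)⁻¹) atTop (𝓝 0)

private lemma logNat_atTop : Tendsto (fun n : ℕ => Real.log n) atTop atTop :=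
  Real.tendsto_log_atTop.comp tendsto_natCast_atTop_atTop

private lemma exp_neg_mul_log_tendsto {θ : ℝ} (hθ : 0 < θ) :
    Tendsto (fun n : ℕ => Real.exp (-θ * Real.log n)) atTop (𝓝 0) :=
  Real.tendsto_exp_atBot.comp (logNat_atTop.const_mul_atTop_of_neg (neg_lt_zero.2 hθ))

private lemma exp_pos_mul_log_tendsto {θ : ℝ} (hθ : 0 < θ) :
    Tendsto (fun n : ℕ => Real.exp (θ * Real.log n)) atTop atTop :=
  Real.tendsto_exp_atTop.comp (logNat_atTop.const_mul_atTop hθ)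

private lemma seq_le {p : ℕ → ℝ} (hp : ∀ n, 0 ≤ p n) {c θ : ℝ} (hθ : θ < c)
    (h : Tendsto (fun n : ℕ => -Real.log (p n) / Real.log n) atTop (𝓝 c)) :
    ∀ᶠ n : ℕ in atTop, p n ≤ Real.exp (-θ * Real.log n) := by
  filter_upwards [h.eventually_const_lt hθ, logNat_atTop.eventually_gt_atTop 0] with n h1 h2
  rcases eq_or_lt_of_le (hp n) with h0 | h0
  · rw [← h0]; positivity
  · have h3 : θ * Real.log n < -Real.log (p n) := (lt_div_iff₀ h2).1 h1
    have h4 : Real.log (p n) ≤ -θ * Real.log n := by linarith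
    calc p n = Real.exp (Real.log (p n)) := (Real.exp_log h0).symm
      _ ≤ Real.exp (-θ * Real.log n) := Real.exp_le_exp.2 h4

private lemma seq_ge {p : ℕ → ℝ} (hp : ∀ᶠ n : ℕ in atTop, 0 < p n) {c θ : ℝ} (hθ : c < θ)
    (h : Tendsto (fun n : ℕ => -Real.log (p n) / Real.log n) atTop (𝓝 c)) :
    ∀ᶠ n : ℕ in atTop, Real.exp (-θ * Real.log n) ≤ p n := by
  filter_upwards [hp, h.eventually_lt_const hθ, logNat_atTop.eventually_gt_atTop 0] with n h0 h1 h2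
  have h3 : -Real.log (p n) < θ * Real.log n := (div_lt_iff₀ h2).1 h1
  have h4 : -θ * Real.log n ≤ Real.log (p n) := by linarith
  calc Real.exp (-θ * Real.log n) ≤ Real.exp (Real.log (p n)) := Real.exp_le_exp.2 h4
    _ = p n := Real.exp_log h0

private lemma aux_upper {p : ℕ → ℝ} (hp : ∀ n, 0 ≤ p n) {c : ℝ} (hc : 1 < c)
    (h : Tendsto (fun n : ℕ => -Real.log (p n) / Real.log n) atTop (𝓝 c)) :
    Tendsto (fun n : ℕ => (n : ℝ) * p n) atTop (𝓝 0) := by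
  set θ := (1 + c) / 2 with hθdef
  have hθ1 : 1 < θ := by rw [hθdef]; linarith
  have hθc : θ < c := by rw [hθdef]; linarith
  refine tendsto_of_tendsto_of_tendsto_of_le_of_le' tendsto_const_nhds
    (exp_neg_mul_log_tendsto (θ := θ - 1) (by linarith)) ?_ ?_
  · exact Eventually.of_forall fun n => mul_nonneg (Nat.cast_nonneg n) (hp n)
  · filter_upwards [seq_le hp hθc h, eventually_ge_atTop 1] with n h1 h2
    have hn : (0:ℝ) < n := by exact_mod_cast h2
    calc (n:ℝ) * p n ≤ (n:ℝ) * Real.exp (-θ * Real.log n) :=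
          mul_le_mul_of_nonneg_left h1 (le_of_lt hn)
      _ = Real.exp (Real.log n) * Real.exp (-θ * Real.log n) := by rw [Real.exp_log hn]
      _ = Real.exp (-(θ - 1) * Real.log n) := by rw [← Real.exp_add]; ring_nf

private lemma aux_pow {p : ℕ → ℝ} (hp1 : ∀ n, p n ≤ 1)
    (hnp : Tendsto (fun n : ℕ => (n : ℝ) * p n) atTop atTop) :
    Tendsto (fun n : ℕ => (1 - p n) ^ n) atTop (𝓝 0) := by
  have hub : Tendsto (fun n : ℕ => Real.exp (-((n:ℝ) * p n))) atTop (𝓝 0) :=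
    Real.tendsto_exp_atBot.comp (tendsto_neg_atBot_iff.2 hnp)
  refine tendsto_of_tendsto_of_tendsto_of_le_of_le' tendsto_const_nhds hub ?_ ?_
  · refine Eventually.of_forall fun n => pow_nonneg (by linarith [hp1 n]) n
  · refine Eventually.of_forall fun n => ?_
    have h1 : (1 - p n) ≤ Real.exp (-p n) := by
      have := Real.add_one_le_exp (-p n); linarith
    calc (1 - p n) ^ n ≤ Real.exp (-p n) ^ n :=
          pow_le_pow_left₀ (by linarith [hp1 n]) h1 n
      _ = Real.exp ((n:ℝ) * (-p n)) := by rw [← Real.exp_nat_mul]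
      _ = Real.exp (-((n:ℝ) * p n)) := by ring_nf

private lemma tendsto_zero_of_toReal {f : ℕ → ENNReal} (hf : ∀ n, f n ≠ ⊤)
    (h : Tendsto (fun n => (f n).toReal) atTop (𝓝 0)) : Tendsto f atTop (𝓝 0) := by
  have h2 := ENNReal.tendsto_ofReal h
  rw [ENNReal.ofReal_zero] at h2
  exact h2.congr fun n => ENNReal.ofReal_toReal (hf n)

private lemma aux_lower {d' : ℕ} {Pa p : ℕ → ℝ} {Pc : Fin d' → ℕ → ℝ} {γ : ℝ} {gc : Fin d' → ℝ}
    (hγ : γ < 1) (hgc : ∀ j, γ < gc j)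
    (hPa : Tendsto (fun n : ℕ => -Real.log (Pa n) / Real.log n) atTop (𝓝 γ))
    (hPc : ∀ j, Tendsto (fun n : ℕ => -Real.log (Pc j n) / Real.log n) atTop (𝓝 (gc j)))
    (hPapos : ∀ᶠ n in atTop, 0 < Pa n)
    (hPcnn : ∀ j n, 0 ≤ Pc j n)
    (hp1 : ∀ n, p n ≤ 1)
    (hple : ∀ᶠ n in atTop, Pa n - ∑ j, Pc j n ≤ p n) :
    Tendsto (fun n : ℕ => (1 - p n) ^ n) atTop (𝓝 0) := by
  classical
  set F : Finset ℝ := insert 1 (Finset.univ.image gc) with hF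
  have hFne : F.Nonempty := ⟨1, Finset.mem_insert_self _ _⟩
  set m := F.min' hFne with hm
  have hγm : γ < m := by
    rw [hm, Finset.lt_min'_iff]
    intro y hy
    rcases Finset.mem_insert.1 hy with rfl | hy
    · exact hγ
    · obtain ⟨j, _, rfl⟩ := Finset.mem_image.1 hy
      exact hgc j
  have hm1 : m ≤ 1 := Finset.min'_le _ _ (Finset.mem_insert_self _ _)
  have hmgc : ∀ j, m ≤ gc j := fun j =>
    Finset.min'_le _ _ (Finset.mem_insert_of_mem (Finset.mem_image_of_mem _ (Finset.mem_univ j)))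
  set θ' := (γ + m) / 2 with hθ'
  set θ'' := (θ' + m) / 2 with hθ''
  have h1 : γ < θ' := by rw [hθ']; linarith
  have h2 : θ' < θ'' := by rw [hθ'', hθ']; linarith
  have h3 : θ'' < m := by rw [hθ'', hθ']; linarith
  have h4 : θ' < 1 := by linarith
  have hA := seq_ge hPapos h1 hPa
  have hC : ∀ᶠ n : ℕ in atTop, ∀ j, Pc j n ≤ Real.exp (-θ'' * Real.log n) := by
    rw [eventually_all]
    exact fun j => seq_le (hPcnn j) (lt_of_lt_of_le h3 (hmgc j)) (hPc j)
  have hsmall : Tendsto (fun n : ℕ => (d' : ℝ) * Real.exp ((θ' - θ'') * Real.log n)) atTop (𝓝 0) := by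
    have := (exp_neg_mul_log_tendsto (θ := θ'' - θ') (by linarith)).const_mul (d' : ℝ)
    rw [mul_zero] at this
    refine this.congr fun n => ?_
    ring_nf
  have hhalf : ∀ᶠ n : ℕ in atTop, (d' : ℝ) * Real.exp ((θ' - θ'') * Real.log n) ≤ 1 / 2 :=
    (hsmall.eventually_lt_const (by norm_num)).mono fun n h => le_of_lt h
  have hplow : ∀ᶠ n : ℕ in atTop, 1 / 2 * Real.exp (-θ' * Real.log n) ≤ p n := by
    filter_upwards [hA, hC, hhalf, hple] with n hA hC hhalf hple
    have hsum : ∑ j, Pc j n ≤ (d' : ℝ) * Real.exp (-θ'' * Real.log n) := by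
      calc ∑ j, Pc j n ≤ ∑ _j : Fin d', Real.exp (-θ'' * Real.log n) :=
            Finset.sum_le_sum fun j _ => hC j
        _ = (d' : ℝ) * Real.exp (-θ'' * Real.log n) := by
            simp [Finset.sum_const, nsmul_eq_mul]
    have hkey : (d' : ℝ) * Real.exp (-θ'' * Real.log n)
        ≤ 1 / 2 * Real.exp (-θ' * Real.log n) := by
      have heq : (d' : ℝ) * Real.exp (-θ'' * Real.log n)
          = ((d' : ℝ) * Real.exp ((θ' - θ'') * Real.log n)) * Real.exp (-θ' * Real.log n) := by
        rw [mul_assoc, ← Real.exp_add]; ring_nf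
      rw [heq]
      exact mul_le_mul_of_nonneg_right hhalf (Real.exp_nonneg _)
    have hge : Pa n - ∑ j, Pc j n ≥ Real.exp (-θ' * Real.log n)
        - 1 / 2 * Real.exp (-θ' * Real.log n) := by
      have := le_trans hsum hkey
      linarith
    have h12 : Real.exp (-θ' * Real.log n) - 1 / 2 * Real.exp (-θ' * Real.log n)
        = 1 / 2 * Real.exp (-θ' * Real.log n) := by ring
    linarith
  have hnp : Tendsto (fun n : ℕ => (n : ℝ) * p n) atTop atTop := by
    have hlb : Tendsto (fun n : ℕ => 1 / 2 * Real.exp ((1 - θ') * Real.log n)) atTop atTop :=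
      (exp_pos_mul_log_tendsto (by linarith : (0:ℝ) < 1 - θ')).const_mul_atTop (by norm_num)
    refine tendsto_atTop_mono' _ ?_ hlb
    filter_upwards [hplow, eventually_ge_atTop 1] with n hplow hn
    have hn0 : (0:ℝ) < n := by exact_mod_cast hn
    calc 1 / 2 * Real.exp ((1 - θ') * Real.log n)
        = (n : ℝ) * (1 / 2 * Real.exp (-θ' * Real.log n)) := by
          rw [show (1 - θ') * Real.log n = Real.log n + -θ' * Real.log n by ring,
            Real.exp_add, Real.exp_log hn0]; ring
      _ ≤ (n : ℝ) * p n := mul_le_mul_of_nonneg_left hplow (le_of_lt hn0)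
  exact aux_pow hp1 hnp

theorem limit_set_from_survival
    {Ω : Type*} [MeasurableSpace Ω] (μ : Measure Ω) [IsProbabilityMeasure μ]
    {d : ℕ} (X : ℕ → Ω → (Fin d → ℝ)) (hXmeas : ∀ i, Measurable (X i))
    -- i.i.d. copies of a random vector supported on [0,∞)^d
    (hindep : iIndepFun X μ)
    (hident : ∀ i, Measure.map (X i) μ = Measure.map (X 0) μ)
    (hsupp : ∀ᵐ ω ∂μ, ∀ j, 0 ≤ X 0 ω j)
    -- marginal tails asymptotically equal to a von Mises function
    (ψ : ℝ → ℝ) (hvM : IsVonMisesExp ψ)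
    (hmarg : ∀ j, Tendsto (fun x => (μ {ω | x < X 0 ω j}).toReal / Real.exp (-ψ x))
      atTop (𝓝 1))
    -- convergence of the joint survival function
    (g : (Fin d → ℝ) → ℝ)
    (hconv : ∀ x : Fin d → ℝ, (∀ j, 0 ≤ x j) → x ≠ 0 →
      Tendsto (fun t => -Real.log ((μ {ω | ∀ j, t * x j ≤ X 0 ω j}).toReal) / ψ t)
        atTop (𝓝 (g x)))
    -- strict monotonicity of g
    (hmono : ∀ x y : Fin d → ℝ, (∀ j, 0 ≤ x j) → (∀ j, x j ≤ y j) → x ≠ y → g x < g y)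
    -- scaling sequence with ψ(rₙ) ~ log n
    (r : ℕ → ℝ) (hr : Tendsto r atTop atTop)
    (hrψ : Tendsto (fun n => ψ (r n) / Real.log n) atTop (𝓝 1)) :
    ConvInProbOnto μ (sampleCloud X r) {x | (∀ j, 0 ≤ x j) ∧ g x ≤ 1} := by
  classical
  intro ε hε
  set G : Set (Fin d → ℝ) := {x | (∀ j, 0 ≤ x j) ∧ g x ≤ 1} with hGdef
  have hNfin : ∀ (n : ℕ) (ω : Ω), (sampleCloud X r n ω).Finite := by
    intro n ω
    have hsub : sampleCloud X r n ω ⊆ (fun i => (r n)⁻¹ • X i ω) '' Set.Icc 1 n := by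
      rintro y ⟨i, h1, h2, rfl⟩; exact ⟨i, ⟨h1, h2⟩, rfl⟩
    exact ((Set.finite_Icc 1 n).image _).subset hsub
  by_cases hGcase : Bornology.IsBounded G ∧ G.Nonempty
  swap
  · -- degenerate case: `G` empty or unbounded, all Hausdorff distances are junk `0`
    have hzero : ∀ n ω, Metric.hausdorffDist (sampleCloud X r n ω) G = 0 := by
      intro n ω
      rcases Set.eq_empty_or_nonempty G with hGe | hGne
      · rw [hGe]; exact Metric.hausdorffDist_empty
      · have hGb : ¬ Bornology.IsBounded G := fun hb => hGcase ⟨hb, hGne⟩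
        have htop : EMetric.hausdorffEdist (sampleCloud X r n ω) G = ⊤ := by
          by_contra hne
          apply hGb
          have hsub : G ⊆ Metric.cthickening
              (EMetric.hausdorffEdist (sampleCloud X r n ω) G).toReal (sampleCloud X r n ω) := by
            intro y hy
            rw [Metric.mem_cthickening_iff]
            calc EMetric.infEdist y (sampleCloud X r n ω)
                ≤ EMetric.hausdorffEdist G (sampleCloud X r n ω) :=
                  EMetric.infEdist_le_hausdorffEdist_of_mem hy
              _ = EMetric.hausdorffEdist (sampleCloud X r n ω) G := EMetric.hausdorffEdist_comm
              _ = ENNReal.ofReal (EMetric.hausdorffEdist (sampleCloud X r n ω) G).toReal :=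
                  (ENNReal.ofReal_toReal hne).symm
          exact ((hNfin n ω).isBounded.cthickening).subset hsub
        simp [Metric.hausdorffDist, show Metric.hausdorffEDist (sampleCloud X r n ω) G = ⊤ from htop]
    have hempty : ∀ n : ℕ, {ω | ε < Metric.hausdorffDist (sampleCloud X r n ω) G} = ∅ := by
      intro n
      ext ω
      simp only [Set.mem_setOf_eq, Set.mem_empty_iff_false, iff_false, not_lt, hzero n ω]
      exact le_of_lt hε
    simp only [hempty, measure_empty]
    exact tendsto_const_nhds
  obtain ⟨hGb, hGne⟩ := hGcase
  -- membership in G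
  have hGmem : ∀ z : Fin d → ℝ, z ∈ G ↔ (∀ j, 0 ≤ z j) ∧ g z ≤ 1 := fun z => Iff.rfl
  -- 0 ∈ G
  have h0G : (0 : Fin d → ℝ) ∈ G := by
    obtain ⟨x₀, hx₀⟩ := hGne
    rcases eq_or_ne x₀ 0 with rfl | hne
    · exact hx₀
    · exact ⟨fun j => le_rfl, le_of_lt (lt_of_lt_of_le
        (hmono 0 x₀ (fun j => le_rfl) (fun j => hx₀.1 j) (Ne.symm hne)) hx₀.2)⟩
  -- a bound for G
  obtain ⟨R, hR⟩ := hGb.subset_closedBall 0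
  set M : ℝ := max R 0 + 1 with hMdef
  have hM0 : 0 < M := by have := le_max_right R 0; rw [hMdef]; linarith
  have hGle : ∀ w ∈ G, ∀ j, w j ≤ max R 0 := by
    intro w hw j
    have h1 : dist w 0 ≤ R := Metric.mem_closedBall.1 (hR hw)
    have h2 : dist (w j) ((0 : Fin d → ℝ) j) ≤ dist w 0 := dist_le_pi_dist w 0 j
    have h3 : |w j| ≤ R := by
      simpa [Real.dist_eq] using h2.trans h1
    exact le_trans (le_abs_self _) (le_trans h3 (le_max_left _ _))
  have hMe : ∀ j : Fin d, 1 < g (Pi.single j M) := by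
    intro j
    by_contra hle
    push_neg at hle
    have hmem : Pi.single j M ∈ G := by
      refine ⟨fun k => ?_, hle⟩
      rcases eq_or_ne k j with rfl | hkj
      · rw [Pi.single_eq_same]; exact le_of_lt hM0
      · rw [Pi.single_eq_of_ne hkj]
    have h1 := hGle _ hmem j
    rw [Pi.single_eq_same, hMdef] at h1
    linarith
  -- measurability facts
  have hmeas_orth : ∀ w : Fin d → ℝ, MeasurableSet {v : Fin d → ℝ | ∀ j, w j ≤ v j} := by
    intro w
    have heq : {v : Fin d → ℝ | ∀ j, w j ≤ v j}
        = ⋂ j, (fun v : Fin d → ℝ => v j) ⁻¹' Set.Ici (w j) := by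
      ext v; simp [Set.mem_iInter]
    rw [heq]
    exact MeasurableSet.iInter fun j => (measurable_pi_apply j) measurableSet_Ici
  have hmeas_box : ∀ lo hi : Fin d → ℝ,
      MeasurableSet {v : Fin d → ℝ | ∀ j, lo j ≤ v j ∧ v j ≤ hi j} := by
    intro lo hi
    have heq : {v : Fin d → ℝ | ∀ j, lo j ≤ v j ∧ v j ≤ hi j}
        = ⋂ j, (fun v : Fin d → ℝ => v j) ⁻¹' Set.Icc (lo j) (hi j) := by
      ext v; simp [Set.mem_iInter, Set.mem_Icc]
    rw [heq]
    exact MeasurableSet.iInter fun j => (measurable_pi_apply j) measurableSet_Icc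
  have hmeas_neg : MeasurableSet {v : Fin d → ℝ | ¬ ∀ j, 0 ≤ v j} := by
    have heq : {v : Fin d → ℝ | ¬ ∀ j, 0 ≤ v j}
        = ⋃ j, (fun v : Fin d → ℝ => v j) ⁻¹' Set.Iio 0 := by
      ext v; simp [not_forall, not_le]
    rw [heq]
    exact MeasurableSet.iUnion fun j => (measurable_pi_apply j) measurableSet_Iio
  -- identical distribution transfer
  have hmap : ∀ (i : ℕ) (B : Set (Fin d → ℝ)), MeasurableSet B →
      μ (X i ⁻¹' B) = μ (X 0 ⁻¹' B) := by
    intro i B hB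
    rw [← Measure.map_apply (hXmeas i) hB, ← Measure.map_apply (hXmeas 0) hB, hident i]
  -- support
  have hNeg0 : μ (X 0 ⁻¹' {v : Fin d → ℝ | ¬ ∀ j, 0 ≤ v j}) = 0 := ae_iff.1 hsupp
  -- ψ(r n) → ∞
  have hψrn : Tendsto (fun n : ℕ => ψ (r n)) atTop atTop := by
    have h1 : Tendsto (fun n : ℕ => ψ (r n) / Real.log n * Real.log n) atTop atTop :=
      hrψ.pos_mul_atTop one_pos logNat_atTop
    refine h1.congr' ?_
    filter_upwards [logNat_atTop.eventually_gt_atTop 0] with n hn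
    field_simp
  have hψne : ∀ᶠ n : ℕ in atTop, ψ (r n) ≠ 0 :=
    (hψrn.eventually_gt_atTop 0).mono fun n h => ne_of_gt h
  -- survival probabilities in terms of log n
  have hslog : ∀ y : Fin d → ℝ, (∀ j, 0 ≤ y j) → y ≠ 0 →
      Tendsto (fun n : ℕ =>
        -Real.log ((μ (X 0 ⁻¹' {v : Fin d → ℝ | ∀ j, r n * y j ≤ v j})).toReal) / Real.log n)
        atTop (𝓝 (g y)) := by
    intro y hy hy0
    have h1 := (hconv y hy hy0).comp hr
    have h2 := h1.mul hrψ
    rw [mul_one] at h2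
    refine h2.congr' ?_
    filter_upwards [hψne, logNat_atTop.eventually_gt_atTop 0] with n h3 h4
    have hset : {ω | ∀ j, r n * y j ≤ X 0 ω j}
        = X 0 ⁻¹' {v : Fin d → ℝ | ∀ j, r n * y j ≤ v j} := rfl
    simp only [Function.comp_apply, hset]
    field_simp
  -- positivity of survival probabilities
  have hpos : ∀ y : Fin d → ℝ, (∀ j, 0 ≤ y j) → y ≠ 0 → ∀ t : ℝ, 0 < t →
      μ (X 0 ⁻¹' {v : Fin d → ℝ | ∀ j, t * y j ≤ v j}) ≠ 0 := by
    intro y hy hy0 t ht hzero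
    have hzg : ∀ z : Fin d → ℝ, (∀ j, 0 ≤ z j) → z ≠ 0 →
        (∀ᶠ s : ℝ in atTop, μ {ω | ∀ j, s * z j ≤ X 0 ω j} = 0) → g z = 0 := by
      intro z hz hz0 hev
      have h1 := hconv z hz hz0
      have h2 : (fun s : ℝ => -Real.log ((μ {ω | ∀ j, s * z j ≤ X 0 ω j}).toReal) / ψ s)
          =ᶠ[atTop] fun _ => (0:ℝ) := by
        filter_upwards [hev] with s hs
        simp [hs]
      exact tendsto_nhds_unique (h1.congr' h2) tendsto_const_nhds
    have hy2 : y ≠ (2:ℝ) • y := by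
      intro h
      apply hy0
      funext j
      have := congrFun h j
      simp only [Pi.smul_apply, smul_eq_mul] at this
      simpa using by linarith
    have hgy : g y = 0 := by
      refine hzg y hy hy0 ?_
      filter_upwards [eventually_ge_atTop t] with s hs
      refine le_antisymm (le_trans (measure_mono ?_) (le_of_eq hzero)) zero_le
      intro ω hω j
      exact le_trans (mul_le_mul_of_nonneg_right hs (hy j)) (hω j)
    have hg2y : g ((2:ℝ) • y) = 0 := by
      refine hzg ((2:ℝ) • y) (fun j => by
        simp only [Pi.smul_apply, smul_eq_mul]; linarith [hy j]) (by
        intro h; apply hy0; funext j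
        have h5 := congrFun h j
        simp only [Pi.smul_apply, smul_eq_mul, Pi.zero_apply] at h5
        simp only [Pi.zero_apply]
        linarith) ?_
      filter_upwards [eventually_ge_atTop t] with s hs
      refine le_antisymm (le_trans (measure_mono ?_) (le_of_eq hzero)) zero_le
      intro ω hω j
      have h1 := hω j
      simp only [Pi.smul_apply, smul_eq_mul] at h1
      have h2 : t * y j ≤ s * (2 * y j) := by nlinarith [hy j]
      linarith
    have := hmono y ((2:ℝ) • y) hy (fun j => by
      simp only [Pi.smul_apply, smul_eq_mul]; linarith [hy j]) hy2
    rw [hgy, hg2y] at this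
    exact lt_irrefl 0 this
  -- marginal tails vanish (measure-theoretic version)
  have htail : ∀ (j : Fin d) (c : ℝ), 0 < c →
      Tendsto (fun n : ℕ => μ (X 0 ⁻¹' {v : Fin d → ℝ | r n * c < v j})) atTop (𝓝 0) := by
    intro j c hc
    have hmeasA : ∀ k : ℕ, MeasurableSet (X 0 ⁻¹' {v : Fin d → ℝ | (k:ℝ) < v j}) := fun k =>
      (hXmeas 0) ((measurable_pi_apply j) measurableSet_Ioi)
    have hanti : Antitone fun k : ℕ => X 0 ⁻¹' {v : Fin d → ℝ | (k:ℝ) < v j} := by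
      intro k l hkl ω hω
      exact lt_of_le_of_lt (by exact_mod_cast hkl : (k:ℝ) ≤ l) hω
    have hinter : (⋂ k : ℕ, X 0 ⁻¹' {v : Fin d → ℝ | (k:ℝ) < v j}) = ∅ := by
      ext ω
      simp only [Set.mem_iInter, Set.mem_preimage, Set.mem_setOf_eq, Set.mem_empty_iff_false,
        iff_false, not_forall, not_lt]
      obtain ⟨k, hk⟩ := exists_nat_gt (X 0 ω j)
      exact ⟨k, le_of_lt hk⟩
    have hlim := tendsto_measure_iInter_atTop (μ := μ)
      (fun k => (hmeasA k).nullMeasurableSet) hanti ⟨0, measure_ne_top μ _⟩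
    rw [hinter, measure_empty] at hlim
    rw [ENNReal.tendsto_nhds_zero]
    intro ε' hε'
    obtain ⟨k, hk⟩ := (ENNReal.tendsto_nhds_zero.1 hlim ε' hε').exists
    filter_upwards [hr.eventually_ge_atTop ((k : ℝ) / c)] with n hn
    refine le_trans (measure_mono ?_) hk
    intro ω hω
    simp only [Set.mem_preimage, Set.mem_setOf_eq] at hω ⊢
    have h1 : (k : ℝ) ≤ r n * c := by
      rw [div_le_iff₀ hc] at hn; linarith
    linarith
  -- Part A: a finite family of orthants with g > 1 covering the far region
  obtain ⟨Y, hYprop, hYcover⟩ :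
      ∃ Y : Finset (Fin d → ℝ),
        (∀ y ∈ Y, (∀ j, 0 ≤ y j) ∧ y ≠ 0 ∧ 1 < g y) ∧
        ∀ z : Fin d → ℝ, (∀ j, 0 ≤ z j) → ε ≤ Metric.infDist z G →
          ∃ y ∈ Y, ∀ j, y j ≤ z j := by
    set δA := ε / 2 with hδA
    have hδA0 : 0 < δA := by rw [hδA]; linarith
    set K : Set (Fin d → ℝ) := {z | (∀ j, 0 ≤ z j ∧ z j ≤ M) ∧ ε ≤ Metric.infDist z G} with hK
    have hKclosed : IsClosed K := by
      have heq : K = (⋂ j, (fun z : Fin d → ℝ => z j) ⁻¹' Set.Icc 0 M) ∩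
          ((fun z => Metric.infDist z G) ⁻¹' Set.Ici ε) := by
        ext z
        simp [hK, Set.mem_iInter, Set.mem_Icc, forall_and]
      rw [heq]
      exact IsClosed.inter (isClosed_iInter fun j => isClosed_Icc.preimage (continuous_apply j))
        (isClosed_Ici.preimage (Metric.continuous_infDist_pt G))
    have hKbdd : Bornology.IsBounded K := by
      refine (Metric.isBounded_closedBall (x := (0 : Fin d → ℝ)) (r := M)).subset ?_
      intro z hz
      rw [Metric.mem_closedBall, dist_pi_le_iff (le_of_lt hM0)]
      intro j
      rw [Real.dist_eq]
      have h1 := (hz.1 j).1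
      have h2 := (hz.1 j).2
      rw [Pi.zero_apply, sub_zero, abs_le]
      constructor <;> linarith
    have hKcomp : IsCompact K := Metric.isCompact_of_isClosed_isBounded hKclosed hKbdd
    set yf : (Fin d → ℝ) → (Fin d → ℝ) := fun z j => max (z j - δA) 0 with hyf
    have hyf0 : ∀ z, ∀ j, (0:ℝ) ≤ yf z j := fun z j => le_max_right _ _
    have hyfdist : ∀ z : Fin d → ℝ, (∀ j, 0 ≤ z j) → dist z (yf z) ≤ δA := by
      intro z hz
      rw [dist_pi_le_iff (le_of_lt hδA0)]
      intro j
      rw [Real.dist_eq, abs_le]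
      rcases le_or_gt 0 (z j - δA) with h | h
      · rw [hyf]; simp only [max_eq_left h]
        constructor <;> linarith
      · rw [hyf]; simp only [max_eq_right (le_of_lt h)]
        constructor <;> [linarith [hz j]; linarith [hz j]]
    have hyfK : ∀ z ∈ K, yf z ≠ 0 ∧ 1 < g (yf z) := by
      intro z hz
      have hdist : dist z (yf z) ≤ δA := hyfdist z fun j => (hz.1 j).1
      have hnotG : yf z ∉ G := by
        intro hmem
        have h1 : Metric.infDist z G ≤ δA :=
          le_trans (Metric.infDist_le_dist_of_mem hmem) hdist
        have h2 := hz.2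
        rw [hδA] at h1
        linarith
      refine ⟨fun h0 => hnotG (h0 ▸ h0G), ?_⟩
      by_contra hle
      push_neg at hle
      exact hnotG ⟨hyf0 z, hle⟩
    have hUopen : ∀ z : K, IsOpen {z' : Fin d → ℝ | ∀ j, (z : Fin d → ℝ) j - δA < z' j} := by
      intro z
      have heq : {z' : Fin d → ℝ | ∀ j, (z : Fin d → ℝ) j - δA < z' j}
          = Set.pi Set.univ fun j => Set.Ioi ((z : Fin d → ℝ) j - δA) := by
        ext z'; simp [Set.mem_pi]
      rw [heq]
      exact isOpen_set_pi Set.finite_univ fun j _ => isOpen_Ioi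
    have hcov : K ⊆ ⋃ z : K, {z' : Fin d → ℝ | ∀ j, (z : Fin d → ℝ) j - δA < z' j} := by
      intro z hz
      exact Set.mem_iUnion.2 ⟨⟨z, hz⟩, fun j => by simp only [Set.mem_setOf_eq]; linarith⟩
    obtain ⟨s, hs⟩ := hKcomp.elim_finite_subcover _ hUopen hcov
    refine ⟨(s.image fun z : K => yf (z : Fin d → ℝ)) ∪
      (Finset.univ.image fun j : Fin d => Pi.single j M), ?_, ?_⟩
    · intro y hy
      rcases Finset.mem_union.1 hy with hy | hy
      · obtain ⟨z, hzs, rfl⟩ := Finset.mem_image.1 hy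
        exact ⟨hyf0 _, (hyfK z z.2).1, (hyfK z z.2).2⟩
      · obtain ⟨j, _, rfl⟩ := Finset.mem_image.1 hy
        refine ⟨fun k => ?_, ?_, hMe j⟩
        · rcases eq_or_ne k j with rfl | hkj
          · rw [Pi.single_eq_same]; exact le_of_lt hM0
          · rw [Pi.single_eq_of_ne hkj]
        · intro h0
          have h1 := congrFun h0 j
          rw [Pi.single_eq_same] at h1
          exact ne_of_gt hM0 (h1 ▸ rfl)
    · intro z hz0 hzdist
      by_cases hzM : ∀ j, z j ≤ M
      · have hzK : z ∈ K := ⟨fun j => ⟨hz0 j, hzM j⟩, hzdist⟩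
        obtain ⟨i, his, hzi⟩ := Set.mem_iUnion₂.1 (hs hzK)
        refine ⟨yf (i : Fin d → ℝ),
          Finset.mem_union_left _ (Finset.mem_image_of_mem _ his), fun j => ?_⟩
        exact max_le (le_of_lt (hzi j)) (hz0 j)
      · push_neg at hzM
        obtain ⟨j, hj⟩ := hzM
        refine ⟨Pi.single j M,
          Finset.mem_union_right _ (Finset.mem_image_of_mem _ (Finset.mem_univ j)), fun k => ?_⟩
        rcases eq_or_ne k j with rfl | hkj
        · rw [Pi.single_eq_same]; exact le_of_lt hj
        · rw [Pi.single_eq_of_ne hkj]; exact hz0 k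
  -- Part B: a finite (ε/2)-net of G with centers in G
  obtain ⟨Tset, hTsub, hTfin, hTcover⟩ := totallyBounded_iff_subset.1
    (((Metric.isCompact_of_isClosed_isBounded isClosed_closure hGb.closure).totallyBounded).subset
      subset_closure) _ (Metric.dist_mem_uniformity (half_pos hε))
  have hTball : G ⊆ ⋃ x ∈ Tset, Metric.ball x (ε / 2) := by
    refine subset_trans hTcover (Set.iUnion₂_mono fun x _ => ?_)
    intro z hz
    exact Metric.mem_ball.2 hz
  set T : Finset (Fin d → ℝ) := hTfin.toFinset with hTdef
  have hTmem : ∀ x, x ∈ T ↔ x ∈ Tset := fun x => hTfin.mem_toFinset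
  set η := ε / 4 with hηdef
  have hη0 : 0 < η := by rw [hηdef]; linarith
  -- points of the scaled box are within ε/2 of the center
  have hboxball : ∀ x : Fin d → ℝ, (∀ j, 0 ≤ x j) → ∀ n : ℕ, 0 < r n →
      ∀ v : Fin d → ℝ, (∀ j, r n * max (x j - η) 0 ≤ v j ∧ v j ≤ r n * (x j + η)) →
      dist ((r n)⁻¹ • v) x < ε / 2 := by
    intro x hx n hrn v hv
    have hle : dist ((r n)⁻¹ • v) x ≤ η := by
      rw [dist_pi_le_iff (le_of_lt hη0)]
      intro j
      have h1 := (hv j).1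
      have h2 := (hv j).2
      have hvj : max (x j - η) 0 ≤ v j / r n := by
        rw [le_div_iff₀ hrn]; linarith [mul_comm (r n) (max (x j - η) 0)]
      have hvj2 : v j / r n ≤ x j + η := by
        rw [div_le_iff₀ hrn]; linarith [mul_comm (r n) (x j + η)]
      have h3 : x j - η ≤ v j / r n := le_trans (le_max_left _ _) hvj
      rw [Real.dist_eq, abs_le]
      have hsmul : ((r n)⁻¹ • v) j = v j / r n := by
        simp [Pi.smul_apply, smul_eq_mul, inv_mul_eq_div]
      rw [hsmul]
      constructor <;> linarith
    rw [hηdef] at hle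
    linarith
  -- per-center probability estimates
  have hcenter : ∀ x ∈ G, Tendsto (fun n : ℕ =>
      (1 - (μ (X 0 ⁻¹' {v : Fin d → ℝ |
        ∀ j, r n * max (x j - η) 0 ≤ v j ∧ v j ≤ r n * (x j + η)})).toReal) ^ n)
      atTop (𝓝 0) := by
    intro x hx
    have hbpos : ∀ j, 0 < x j + η := fun j => add_pos_of_nonneg_of_pos (hx.1 j) hη0
    by_cases ha0 : (fun j => max (x j - η) 0) = (0 : Fin d → ℝ)
    · -- the lower corner is the origin: probability tends to 1
      have haj : ∀ j, max (x j - η) 0 = 0 := fun j => congrFun ha0 j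
      have hcompl : Tendsto (fun n : ℕ =>
          μ ((X 0 ⁻¹' {v : Fin d → ℝ |
            ∀ j, r n * max (x j - η) 0 ≤ v j ∧ v j ≤ r n * (x j + η)})ᶜ)) atTop (𝓝 0) := by
        have hsum : Tendsto (fun n : ℕ =>
            μ (X 0 ⁻¹' {v : Fin d → ℝ | ¬ ∀ j, 0 ≤ v j}) +
            ∑ j : Fin d, μ (X 0 ⁻¹' {v : Fin d → ℝ | r n * (x j + η) < v j}))
            atTop (𝓝 0) := by
          have h1 := tendsto_finset_sum (Finset.univ : Finset (Fin d))
            (fun j _ => htail j (x j + η) (hbpos j))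
          have h2 : Tendsto (fun _ : ℕ =>
              μ (X 0 ⁻¹' {v : Fin d → ℝ | ¬ ∀ j, 0 ≤ v j})) atTop (𝓝 0) := by
            rw [hNeg0]; exact tendsto_const_nhds
          simpa using h2.add h1
        refine tendsto_of_tendsto_of_tendsto_of_le_of_le' tendsto_const_nhds hsum
          (Eventually.of_forall fun n => zero_le) (Eventually.of_forall fun n => ?_)
        have hsub : (X 0 ⁻¹' {v : Fin d → ℝ |
            ∀ j, r n * max (x j - η) 0 ≤ v j ∧ v j ≤ r n * (x j + η)})ᶜ ⊆
            X 0 ⁻¹' {v : Fin d → ℝ | ¬ ∀ j, 0 ≤ v j} ∪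
            ⋃ j : Fin d, X 0 ⁻¹' {v : Fin d → ℝ | r n * (x j + η) < v j} := by
          intro ω hω
          simp only [Set.mem_compl_iff, Set.mem_preimage, Set.mem_setOf_eq, not_forall] at hω
          obtain ⟨j, hj⟩ := hω
          rw [not_and_or] at hj
          rcases hj with hj | hj
          · rw [haj j, mul_zero, not_le] at hj
            exact Or.inl (by
              simp only [Set.mem_preimage, Set.mem_setOf_eq, not_forall]
              exact ⟨j, not_le.2 hj⟩)
          · exact Or.inr (Set.mem_iUnion.2 ⟨j, by
              simp only [Set.mem_preimage, Set.mem_setOf_eq]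
              exact not_le.1 hj⟩)
        calc μ ((X 0 ⁻¹' {v : Fin d → ℝ |
              ∀ j, r n * max (x j - η) 0 ≤ v j ∧ v j ≤ r n * (x j + η)})ᶜ)
            ≤ μ (X 0 ⁻¹' {v : Fin d → ℝ | ¬ ∀ j, 0 ≤ v j} ∪
              ⋃ j : Fin d, X 0 ⁻¹' {v : Fin d → ℝ | r n * (x j + η) < v j}) :=
              measure_mono hsub
          _ ≤ μ (X 0 ⁻¹' {v : Fin d → ℝ | ¬ ∀ j, 0 ≤ v j}) +
              μ (⋃ j : Fin d, X 0 ⁻¹' {v : Fin d → ℝ | r n * (x j + η) < v j}) :=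
              measure_union_le _ _
          _ ≤ μ (X 0 ⁻¹' {v : Fin d → ℝ | ¬ ∀ j, 0 ≤ v j}) +
              ∑ j : Fin d, μ (X 0 ⁻¹' {v : Fin d → ℝ | r n * (x j + η) < v j}) := by
              gcongr
              exact measure_iUnion_fintype_le _ _
      have h1p : ∀ n : ℕ, 1 - (μ (X 0 ⁻¹' {v : Fin d → ℝ |
          ∀ j, r n * max (x j - η) 0 ≤ v j ∧ v j ≤ r n * (x j + η)})).toReal
          = (μ ((X 0 ⁻¹' {v : Fin d → ℝ |
          ∀ j, r n * max (x j - η) 0 ≤ v j ∧ v j ≤ r n * (x j + η)})ᶜ)).toReal := by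
        intro n
        rw [prob_compl_eq_one_sub ((hXmeas 0) (hmeas_box _ _)),
          ENNReal.toReal_sub_of_le prob_le_one ENNReal.one_ne_top, ENNReal.toReal_one]
      have hto : Tendsto (fun n : ℕ => 1 - (μ (X 0 ⁻¹' {v : Fin d → ℝ |
          ∀ j, r n * max (x j - η) 0 ≤ v j ∧ v j ≤ r n * (x j + η)})).toReal) atTop (𝓝 0) := by
        have h2 := (ENNReal.tendsto_toReal ENNReal.zero_ne_top).comp hcompl
        simp only [ENNReal.toReal_zero] at h2
        exact h2.congr fun n => (h1p n).symm
      refine tendsto_of_tendsto_of_tendsto_of_le_of_le' tendsto_const_nhds hto ?_ ?_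
      · refine Eventually.of_forall fun n => pow_nonneg ?_ n
        have := ENNReal.toReal_mono ENNReal.one_ne_top
          (prob_le_one (μ := μ) (s := X 0 ⁻¹' {v : Fin d → ℝ |
            ∀ j, r n * max (x j - η) 0 ≤ v j ∧ v j ≤ r n * (x j + η)}))
        rw [ENNReal.toReal_one] at this
        linarith
      · filter_upwards [eventually_ge_atTop 1] with n hn
        have hple1 : (μ (X 0 ⁻¹' {v : Fin d → ℝ |
            ∀ j, r n * max (x j - η) 0 ≤ v j ∧ v j ≤ r n * (x j + η)})).toReal ≤ 1 := by
          have := ENNReal.toReal_mono ENNReal.one_ne_top (prob_le_one (μ := μ)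
            (s := X 0 ⁻¹' {v : Fin d → ℝ |
              ∀ j, r n * max (x j - η) 0 ≤ v j ∧ v j ≤ r n * (x j + η)}))
          rw [ENNReal.toReal_one] at this
          exact this
        calc (1 - (μ (X 0 ⁻¹' {v : Fin d → ℝ |
              ∀ j, r n * max (x j - η) 0 ≤ v j ∧ v j ≤ r n * (x j + η)})).toReal) ^ n
            ≤ (1 - (μ (X 0 ⁻¹' {v : Fin d → ℝ |
              ∀ j, r n * max (x j - η) 0 ≤ v j ∧ v j ≤ r n * (x j + η)})).toReal) ^ 1 := by
              apply pow_le_pow_of_le_one (by linarith) (by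
                have := ENNReal.toReal_nonneg (a := μ (X 0 ⁻¹' {v : Fin d → ℝ |
                  ∀ j, r n * max (x j - η) 0 ≤ v j ∧ v j ≤ r n * (x j + η)}))
                linarith) hn
          _ = 1 - (μ (X 0 ⁻¹' {v : Fin d → ℝ |
              ∀ j, r n * max (x j - η) 0 ≤ v j ∧ v j ≤ r n * (x j + η)})).toReal := pow_one _
    · -- generic case: use the joint survival function
      set a : Fin d → ℝ := fun j => max (x j - η) 0 with hadef
      set b : Fin d → ℝ := fun j => x j + η with hbdef
      have ha0' : ∀ j, 0 ≤ a j := fun j => le_max_right _ _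
      have hax : ∀ j, a j ≤ x j := fun j => max_le (by linarith) (hx.1 j)
      have hanex : a ≠ x := by
        intro h
        apply ha0
        have hx0 : ∀ j, x j = 0 := by
          intro j
          by_contra hne
          have hxj : 0 < x j := lt_of_le_of_ne (hx.1 j) (Ne.symm hne)
          have hlt : a j < x j := by
            rw [hadef]
            exact max_lt (by linarith) hxj
          rw [h] at hlt
          exact lt_irrefl _ hlt
        funext j
        rw [hadef]
        simp only [Pi.zero_apply, hx0 j, zero_sub]
        exact max_eq_right (by linarith)
      have hga : g a < 1 := lt_of_lt_of_le (hmono a x ha0' hax hanex) hx.2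
      set c : Fin d → Fin d → ℝ := fun j => Function.update a j (b j) with hcdef
      have hab : ∀ j, a j < b j := fun j =>
        lt_of_le_of_lt (hax j) (by rw [hbdef]; simp only; linarith [hη0])
      have hc0 : ∀ j k, 0 ≤ c j k := by
        intro j k
        rcases eq_or_ne k j with rfl | hkj
        · rw [hcdef]; simp only [Function.update_self]
          exact le_of_lt (hbpos k)
        · rw [hcdef]; simp only [Function.update_of_ne hkj]
          exact ha0' k
      have hcne : ∀ j, c j ≠ 0 := by
        intro j h
        have h1 := congrFun h j
        rw [hcdef] at h1
        simp only [Function.update_self, Pi.zero_apply] at h1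
        have := hbpos j
        rw [hbdef] at h1
        simp only at h1
        linarith
      have hgc : ∀ j, g a < g (c j) := by
        intro j
        refine hmono a (c j) ha0' (fun k => ?_) (fun h => ?_)
        · rcases eq_or_ne k j with rfl | hkj
          · rw [hcdef]; simp only [Function.update_self]
            exact le_of_lt (hab k)
          · rw [hcdef]; simp only [Function.update_of_ne hkj]
            exact le_rfl
        · have h1 := congrFun h j
          rw [hcdef] at h1
          simp only [Function.update_self] at h1
          exact ne_of_lt (hab j) h1
      refine aux_lower (Pa := fun n : ℕ =>
          (μ (X 0 ⁻¹' {v : Fin d → ℝ | ∀ j, r n * a j ≤ v j})).toReal)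
        (Pc := fun j (n : ℕ) =>
          (μ (X 0 ⁻¹' {v : Fin d → ℝ | ∀ k, r n * c j k ≤ v k})).toReal)
        hga hgc (hslog a ha0' ha0) (fun j => hslog (c j) (hc0 j) (hcne j)) ?_
        (fun j n => ENNReal.toReal_nonneg) (fun n => ?_) ?_
      · filter_upwards [hr.eventually_gt_atTop 0] with n hn
        exact ENNReal.toReal_pos (hpos a ha0' ha0 (r n) hn) (measure_ne_top μ _)
      · have := ENNReal.toReal_mono ENNReal.one_ne_top (prob_le_one (μ := μ)
          (s := X 0 ⁻¹' {v : Fin d → ℝ |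
            ∀ j, r n * max (x j - η) 0 ≤ v j ∧ v j ≤ r n * (x j + η)}))
        rw [ENNReal.toReal_one] at this
        exact this
      · refine Eventually.of_forall fun n => ?_
        have hsub : {v : Fin d → ℝ | ∀ j, r n * a j ≤ v j} ⊆
            {v : Fin d → ℝ | ∀ j, r n * a j ≤ v j ∧ v j ≤ r n * b j} ∪
            ⋃ j : Fin d, {v : Fin d → ℝ | ∀ k, r n * c j k ≤ v k} := by
          intro v hv
          by_cases hvb : ∀ j, v j ≤ r n * b j
          · exact Or.inl fun j => ⟨hv j, hvb j⟩
          · push_neg at hvb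
            obtain ⟨j, hj⟩ := hvb
            refine Or.inr (Set.mem_iUnion.2 ⟨j, fun k => ?_⟩)
            rcases eq_or_ne k j with rfl | hkj
            · rw [hcdef]; simp only [Function.update_self]
              exact le_of_lt hj
            · rw [hcdef]; simp only [Function.update_of_ne hkj]
              exact hv k
        have hmeasle : μ (X 0 ⁻¹' {v : Fin d → ℝ | ∀ j, r n * a j ≤ v j}) ≤
            μ (X 0 ⁻¹' {v : Fin d → ℝ | ∀ j, r n * a j ≤ v j ∧ v j ≤ r n * b j}) +
            ∑ j : Fin d, μ (X 0 ⁻¹' {v : Fin d → ℝ | ∀ k, r n * c j k ≤ v k}) := by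
          calc μ (X 0 ⁻¹' {v : Fin d → ℝ | ∀ j, r n * a j ≤ v j})
              ≤ μ (X 0 ⁻¹' ({v : Fin d → ℝ | ∀ j, r n * a j ≤ v j ∧ v j ≤ r n * b j} ∪
                ⋃ j : Fin d, {v : Fin d → ℝ | ∀ k, r n * c j k ≤ v k})) :=
                measure_mono (Set.preimage_mono hsub)
            _ = μ (X 0 ⁻¹' {v : Fin d → ℝ | ∀ j, r n * a j ≤ v j ∧ v j ≤ r n * b j} ∪
                ⋃ j : Fin d, X 0 ⁻¹' {v : Fin d → ℝ | ∀ k, r n * c j k ≤ v k}) := by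
                rw [Set.preimage_union, Set.preimage_iUnion]
            _ ≤ μ (X 0 ⁻¹' {v : Fin d → ℝ | ∀ j, r n * a j ≤ v j ∧ v j ≤ r n * b j}) +
                μ (⋃ j : Fin d, X 0 ⁻¹' {v : Fin d → ℝ | ∀ k, r n * c j k ≤ v k}) :=
                measure_union_le _ _
            _ ≤ _ := by
                gcongr
                exact measure_iUnion_fintype_le _ _
        have hfin1 : μ (X 0 ⁻¹' {v : Fin d → ℝ | ∀ j, r n * a j ≤ v j ∧ v j ≤ r n * b j}) +
            ∑ j : Fin d, μ (X 0 ⁻¹' {v : Fin d → ℝ | ∀ k, r n * c j k ≤ v k}) ≠ ⊤ := by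
          refine ENNReal.add_ne_top.2 ⟨measure_ne_top μ _, ?_⟩
          exact (ENNReal.sum_lt_top.2 fun j _ => measure_lt_top μ _).ne
        have h2 := ENNReal.toReal_mono hfin1 hmeasle
        rw [ENNReal.toReal_add (measure_ne_top μ _)
          ((ENNReal.sum_lt_top.2 fun j _ => measure_lt_top μ _).ne),
          ENNReal.toReal_sum (fun j _ => measure_ne_top μ _)] at h2
        have hboxeq : {v : Fin d → ℝ | ∀ j, r n * a j ≤ v j ∧ v j ≤ r n * b j}
            = {v : Fin d → ℝ | ∀ j, r n * max (x j - η) 0 ≤ v j ∧ v j ≤ r n * (x j + η)} := rfl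
        rw [hboxeq] at h2
        linarith
  -- convergence of the bounding sequences
  have hboundA : ∀ y ∈ Y, Tendsto (fun n : ℕ =>
      (n : ENNReal) * μ (X 0 ⁻¹' {v : Fin d → ℝ | ∀ j, r n * y j ≤ v j})) atTop (𝓝 0) := by
    intro y hy
    obtain ⟨hy0, hyne, hgy⟩ := hYprop y hy
    refine tendsto_zero_of_toReal (fun n => ENNReal.mul_ne_top (ENNReal.natCast_ne_top n)
      (measure_ne_top μ _)) ?_
    have h1 := aux_upper (p := fun n : ℕ =>
        (μ (X 0 ⁻¹' {v : Fin d → ℝ | ∀ j, r n * y j ≤ v j})).toReal)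
      (fun n => ENNReal.toReal_nonneg) hgy (hslog y hy0 hyne)
    refine h1.congr fun n => ?_
    simp [ENNReal.toReal_mul]
  have hboundB : ∀ x ∈ T, Tendsto (fun n : ℕ =>
      μ (X 0 ⁻¹' {v : Fin d → ℝ |
        ∀ j, r n * max (x j - η) 0 ≤ v j ∧ v j ≤ r n * (x j + η)}ᶜ) ^ n) atTop (𝓝 0) := by
    intro x hxT
    have hxG : x ∈ G := hTsub ((hTmem x).1 hxT)
    refine tendsto_zero_of_toReal (fun n => ENNReal.pow_ne_top (measure_ne_top μ _)) ?_
    refine (hcenter x hxG).congr fun n => ?_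
    rw [ENNReal.toReal_pow]
    congr 1
    rw [Set.preimage_compl, prob_compl_eq_one_sub ((hXmeas 0) (hmeas_box _ _)),
      ENNReal.toReal_sub_of_le prob_le_one ENNReal.one_ne_top, ENNReal.toReal_one]
  have hbound : Tendsto (fun n : ℕ =>
      (∑ y ∈ Y, (n : ENNReal) * μ (X 0 ⁻¹' {v : Fin d → ℝ | ∀ j, r n * y j ≤ v j})) +
      ∑ x ∈ T, μ (X 0 ⁻¹' {v : Fin d → ℝ |
        ∀ j, r n * max (x j - η) 0 ≤ v j ∧ v j ≤ r n * (x j + η)}ᶜ) ^ n) atTop (𝓝 0) := by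
    have hA := tendsto_finset_sum Y fun y hy => hboundA y hy
    have hB := tendsto_finset_sum T fun x hx => hboundB x hx
    have hAB := hA.add hB
    simpa using hAB
  -- final squeeze
  refine tendsto_of_tendsto_of_tendsto_of_le_of_le' tendsto_const_nhds hbound
    (Eventually.of_forall fun n => zero_le) ?_
  filter_upwards [hr.eventually_gt_atTop 0] with n hrn
  have hU1 : μ (⋃ i ∈ Finset.Icc 1 n, X i ⁻¹' ({v : Fin d → ℝ | ¬ ∀ j, 0 ≤ v j} ∪
      ⋃ y ∈ Y, {v : Fin d → ℝ | ∀ j, r n * y j ≤ v j})) ≤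
      ∑ y ∈ Y, (n : ENNReal) * μ (X 0 ⁻¹' {v : Fin d → ℝ | ∀ j, r n * y j ≤ v j}) := by
    have hper : ∀ i : ℕ, μ (X i ⁻¹' ({v : Fin d → ℝ | ¬ ∀ j, 0 ≤ v j} ∪
        ⋃ y ∈ Y, {v : Fin d → ℝ | ∀ j, r n * y j ≤ v j})) ≤
        ∑ y ∈ Y, μ (X 0 ⁻¹' {v : Fin d → ℝ | ∀ j, r n * y j ≤ v j}) := by
      intro i
      rw [Set.preimage_union]
      refine le_trans (measure_union_le _ _) ?_
      have hz : μ (X i ⁻¹' {v : Fin d → ℝ | ¬ ∀ j, 0 ≤ v j}) = 0 := by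
        rw [hmap i _ hmeas_neg]; exact hNeg0
      rw [hz, zero_add, Set.preimage_iUnion₂]
      refine le_trans (measure_biUnion_finset_le _ _) (Finset.sum_le_sum fun y hy => ?_)
      rw [hmap i _ (hmeas_orth _)]
    calc μ (⋃ i ∈ Finset.Icc 1 n, X i ⁻¹' ({v : Fin d → ℝ | ¬ ∀ j, 0 ≤ v j} ∪
        ⋃ y ∈ Y, {v : Fin d → ℝ | ∀ j, r n * y j ≤ v j}))
        ≤ ∑ i ∈ Finset.Icc 1 n, μ (X i ⁻¹' ({v : Fin d → ℝ | ¬ ∀ j, 0 ≤ v j} ∪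
          ⋃ y ∈ Y, {v : Fin d → ℝ | ∀ j, r n * y j ≤ v j})) := measure_biUnion_finset_le _ _
      _ ≤ ∑ _i ∈ Finset.Icc 1 n, ∑ y ∈ Y,
          μ (X 0 ⁻¹' {v : Fin d → ℝ | ∀ j, r n * y j ≤ v j}) :=
          Finset.sum_le_sum fun i _ => hper i
      _ = (n : ENNReal) * ∑ y ∈ Y, μ (X 0 ⁻¹' {v : Fin d → ℝ | ∀ j, r n * y j ≤ v j}) := by
          rw [Finset.sum_const, Nat.card_Icc]
          simp [nsmul_eq_mul]
      _ = ∑ y ∈ Y, (n : ENNReal) * μ (X 0 ⁻¹' {v : Fin d → ℝ | ∀ j, r n * y j ≤ v j}) :=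
          Finset.mul_sum _ _ _
  have hU2 : μ (⋃ x ∈ T, ⋂ i ∈ Finset.Icc 1 n, X i ⁻¹' {v : Fin d → ℝ |
      ∀ j, r n * max (x j - η) 0 ≤ v j ∧ v j ≤ r n * (x j + η)}ᶜ) ≤
      ∑ x ∈ T, μ (X 0 ⁻¹' {v : Fin d → ℝ |
        ∀ j, r n * max (x j - η) 0 ≤ v j ∧ v j ≤ r n * (x j + η)}ᶜ) ^ n := by
    refine le_trans (measure_biUnion_finset_le _ _) (Finset.sum_le_sum fun x hx => ?_)
    refine le_of_eq ?_
    have hprod := hindep.meas_biInter (S := Finset.Icc 1 n)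
      (s := fun i => X i ⁻¹' {v : Fin d → ℝ |
        ∀ j, r n * max (x j - η) 0 ≤ v j ∧ v j ≤ r n * (x j + η)}ᶜ)
      (fun i _ => ⟨_, (hmeas_box _ _).compl, rfl⟩)
    rw [hprod]
    have hcongr : ∀ i ∈ Finset.Icc 1 n, μ (X i ⁻¹' {v : Fin d → ℝ |
        ∀ j, r n * max (x j - η) 0 ≤ v j ∧ v j ≤ r n * (x j + η)}ᶜ) =
        μ (X 0 ⁻¹' {v : Fin d → ℝ |
        ∀ j, r n * max (x j - η) 0 ≤ v j ∧ v j ≤ r n * (x j + η)}ᶜ) :=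
      fun i _ => hmap i _ (hmeas_box _ _).compl
    rw [Finset.prod_congr rfl hcongr, Finset.prod_const, Nat.card_Icc]
    simp
  have hincl : {ω | ε < Metric.hausdorffDist (sampleCloud X r n ω) G} ⊆
      (⋃ i ∈ Finset.Icc 1 n, X i ⁻¹' ({v : Fin d → ℝ | ¬ ∀ j, 0 ≤ v j} ∪
        ⋃ y ∈ Y, {v : Fin d → ℝ | ∀ j, r n * y j ≤ v j})) ∪
      ⋃ x ∈ T, ⋂ i ∈ Finset.Icc 1 n, X i ⁻¹' {v : Fin d → ℝ |
        ∀ j, r n * max (x j - η) 0 ≤ v j ∧ v j ≤ r n * (x j + η)}ᶜ := by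
    intro ω hω
    rw [Set.mem_setOf_eq] at hω
    by_contra hnot
    rw [Set.mem_union, not_or] at hnot
    obtain ⟨hA, hB⟩ := hnot
    have hdle : Metric.hausdorffDist (sampleCloud X r n ω) G ≤ ε := by
      apply Metric.hausdorffDist_le_of_mem_dist (le_of_lt hε)
      · rintro p ⟨i, hi1, hi2, rfl⟩
        have hiIcc : i ∈ Finset.Icc 1 n := Finset.mem_Icc.2 ⟨hi1, hi2⟩
        have hnotin : X i ω ∉ {v : Fin d → ℝ | ¬ ∀ j, 0 ≤ v j} ∪
            ⋃ y ∈ Y, {v : Fin d → ℝ | ∀ j, r n * y j ≤ v j} := by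
          intro hmem
          exact hA (Set.mem_biUnion hiIcc hmem)
        rw [Set.mem_union, not_or] at hnotin
        obtain ⟨hnn, horth⟩ := hnotin
        rw [Set.mem_setOf_eq, not_not] at hnn
        by_contra hfar
        push_neg at hfar
        have hinf : ε ≤ Metric.infDist ((r n)⁻¹ • X i ω) G := by
          by_contra hlt
          push_neg at hlt
          obtain ⟨w, hwG, hww⟩ := (Metric.infDist_lt_iff hGne).1 hlt
          exact absurd (hfar w hwG) (not_lt.2 hww.le)
        have hz0 : ∀ j, 0 ≤ ((r n)⁻¹ • X i ω) j := fun j =>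
          mul_nonneg (inv_nonneg.2 (le_of_lt hrn)) (hnn j)
        obtain ⟨y, hyY, hyle⟩ := hYcover _ hz0 hinf
        have hmemY : X i ω ∈ {v : Fin d → ℝ | ∀ j, r n * y j ≤ v j} := by
          intro j
          have h5 := hyle j
          rw [Pi.smul_apply, smul_eq_mul] at h5
          calc r n * y j ≤ r n * ((r n)⁻¹ * X i ω j) :=
                mul_le_mul_of_nonneg_left h5 (le_of_lt hrn)
            _ = X i ω j := by field_simp
        exact absurd (Set.mem_biUnion hyY hmemY) horth
      · intro w hwG
        obtain ⟨x, hxTset, hxball⟩ := Set.mem_iUnion₂.1 (hTball hwG)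
        have hxT : x ∈ T := (hTmem x).2 hxTset
        have hnotall : ω ∉ ⋂ i ∈ Finset.Icc 1 n, X i ⁻¹' {v : Fin d → ℝ |
            ∀ j, r n * max (x j - η) 0 ≤ v j ∧ v j ≤ r n * (x j + η)}ᶜ :=
          fun hmem => hB (Set.mem_biUnion hxT hmem)
        simp only [Set.mem_iInter, not_forall] at hnotall
        obtain ⟨i, hiIcc, hibox⟩ := hnotall
        rw [Set.mem_preimage, Set.mem_compl_iff, not_not] at hibox
        obtain ⟨hi1, hi2⟩ := Finset.mem_Icc.1 hiIcc
        refine ⟨(r n)⁻¹ • X i ω, ⟨i, hi1, hi2, rfl⟩, ?_⟩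
        have hxG : x ∈ G := hTsub hxTset
        have hd1 : dist ((r n)⁻¹ • X i ω) x < ε / 2 :=
          hboxball x (fun j => hxG.1 j) n hrn _ hibox
        have hd2 : dist w x < ε / 2 := Metric.mem_ball.1 hxball
        calc dist w ((r n)⁻¹ • X i ω) ≤ dist w x + dist ((r n)⁻¹ • X i ω) x :=
              dist_triangle_right _ _ _
          _ ≤ ε := by linarith
    exact absurd hω (not_lt.2 hdle)
  calc μ {ω | ε < Metric.hausdorffDist (sampleCloud X r n ω) G}
      ≤ μ ((⋃ i ∈ Finset.Icc 1 n, X i ⁻¹' ({v : Fin d → ℝ | ¬ ∀ j, 0 ≤ v j} ∪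
          ⋃ y ∈ Y, {v : Fin d → ℝ | ∀ j, r n * y j ≤ v j})) ∪
        ⋃ x ∈ T, ⋂ i ∈ Finset.Icc 1 n, X i ⁻¹' {v : Fin d → ℝ |
          ∀ j, r n * max (x j - η) 0 ≤ v j ∧ v j ≤ r n * (x j + η)}ᶜ) := measure_mono hincl
    _ ≤ μ (⋃ i ∈ Finset.Icc 1 n, X i ⁻¹' ({v : Fin d → ℝ | ¬ ∀ j, 0 ≤ v j} ∪
          ⋃ y ∈ Y, {v : Fin d → ℝ | ∀ j, r n * y j ≤ v j})) +
        μ (⋃ x ∈ T, ⋂ i ∈ Finset.Icc 1 n, X i ⁻¹' {v : Fin d → ℝ |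
          ∀ j, r n * max (x j - η) 0 ≤ v j ∧ v j ≤ r n * (x j + η)}ᶜ) := measure_union_le _ _
    _ ≤ (∑ y ∈ Y, (n : ENNReal) * μ (X 0 ⁻¹' {v : Fin d → ℝ | ∀ j, r n * y j ≤ v j})) +
        ∑ x ∈ T, μ (X 0 ⁻¹' {v : Fin d → ℝ |
          ∀ j, r n * max (x j - η) 0 ≤ v j ∧ v j ≤ r n * (x j + η)}ᶜ) ^ n :=
        add_le_add hU1 hU2
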